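/- Let m ≥ 2 and n ≥ 1. Consider the random restriction ρ on the variables of IND_m(F) defined as follows: independently for each i ∈ [n], pick j_i ∈ [m] uniformly, set x_{i,j_i} = 1 and x_{i,j'} = 0 for j' ≠ j_i, set extension variables so all clauses encoding x_{i,1} ∨ ⋯ ∨ x_{i,m} are satisfied, set y_{i,j} uniformly in {0,1} for j ≠ j_i, and leave y_{i,j_i} unassigned. Then for every clause C over the variables of IND_m(F) and every integer W ≥ 0, the probability that the restricted clause C|_ρ has width at least W is at most (2/(m+1))^W. -/

import Mathlib

/-- Variables of the indexed formula `IND_m(F)`: selector variables `x i j`,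
target variables `y i j`, and extension variables `e i j`. -/
inductive IndVar (n : ℕ) where
  | x (i : Fin n) (j : ℕ)
  | y (i : Fin n) (j : ℕ)
  | e (i : Fin n) (j : ℕ)
deriving DecidableEq

/-- The column index of a variable. -/
def IndVar.jdx {n : ℕ} : IndVar n → ℕ
  | .x _ j => j
  | .y _ j => j
  | .e _ j => j

/-- The value assigned to each variable of `IND_m(F)` by the random restriction
determined by the pointers `J` and the `y`-values `g`: each `x i j` is set to `1` iff
`j = J i`; the extension variable `e i j` (meaning "some `x i j'` with `j' ≥ j` is
true") is set so that all big-OR encoding clauses are satisfied; `y i (J i)` is left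
unassigned and every other `y i j` gets the value `g (i,j)`. -/
def restrVal (n m : ℕ) (J : Fin n → Fin m) (g : Fin n × Fin m → Bool) :
    IndVar n → Option Bool
  | IndVar.x i j => some (decide (j = (J i : ℕ)))
  | IndVar.y i j =>
      if j = (J i : ℕ) then none
      else if h : j < m then some (g (i, ⟨j, h⟩)) else some false
  | IndVar.e i j => some (decide (j ≤ (J i : ℕ)))

/-- Width of the restricted clause `C|_ρ`: `0` if some literal is satisfied (the clause
becomes true), and otherwise the number of literals left unassigned. -/
def restrWidth (n m : ℕ) (J : Fin n → Fin m) (g : Fin n × Fin m → Bool)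
    (C : Finset (IndVar n × Bool)) : ℕ :=
  if ∃ l ∈ C, restrVal n m J g l.1 = some l.2 then 0
  else (C.filter fun l => restrVal n m J g l.1 = none).card

namespace Stmt14

def idx {n : ℕ} : IndVar n → Fin n
  | .x i _ => i
  | .y i _ => i
  | .e i _ => i

def val0 {n : ℕ} (m : ℕ) (j : Fin m) (g : Fin m → Bool) : IndVar n → Option Bool
  | IndVar.x _ j' => some (decide (j' = (j : ℕ)))
  | IndVar.y _ j' =>
      if j' = (j : ℕ) then none
      else if h : j' < m then some (g ⟨j', h⟩) else some false
  | IndVar.e _ j' => some (decide (j' ≤ (j : ℕ)))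

lemma restrVal_eq {n m : ℕ} (J : Fin n → Fin m) (g : Fin n × Fin m → Bool) (v : IndVar n) :
    restrVal n m J g v = val0 m (J (idx v)) (fun j => g (idx v, j)) v := by
  cases v <;> rfl

lemma restrVal_none {n m : ℕ} {J : Fin n → Fin m} {g : Fin n × Fin m → Bool} {v : IndVar n}
    (h : restrVal n m J g v = none) : v = IndVar.y (idx v) (J (idx v) : ℕ) := by
  cases v with
  | x i j => simp [restrVal] at h
  | e i j => simp [restrVal] at h
  | y i j =>
    by_cases hj : j = (J i : ℕ)
    · simp [idx, hj]
    · simp only [restrVal, if_neg hj] at h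
      split at h <;> simp at h

variable {n m : ℕ}

open Finset

def blockSat (C : Finset (IndVar n × Bool)) (i : Fin n) (p : Fin m × (Fin m → Bool)) : Prop :=
  ∃ l ∈ C, idx l.1 = i ∧ val0 m p.1 p.2 l.1 = some l.2

instance (C : Finset (IndVar n × Bool)) (i : Fin n) (p : Fin m × (Fin m → Bool)) :
    Decidable (blockSat C i p) := by unfold blockSat; infer_instance

/-- The `y`-variables of block `i` mentioned in `C`. -/
def Yv (C : Finset (IndVar n × Bool)) (i : Fin n) : Finset (Fin m) :=
  Finset.univ.filter fun j : Fin m => ∃ b, (IndVar.y i (j : ℕ), b) ∈ C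

noncomputable def wgt (C : Finset (IndVar n × Bool)) (i : Fin n)
    (p : Fin m × (Fin m → Bool)) : ℝ :=
  if blockSat C i p then 0
  else if p.1 ∈ Yv C i then ((m : ℝ) + 1) / 2 else 1

lemma wgt_nonneg (C : Finset (IndVar n × Bool)) (i : Fin n) (p : Fin m × (Fin m → Bool)) :
    0 ≤ wgt C i p := by
  unfold wgt; split
  · exact le_rfl
  · split <;> positivity

/-- Count of bad `g`'s for a fixed pointer `j`. -/
lemma count_bad (C : Finset (IndVar n × Bool)) (i : Fin n) (j : Fin m) :
    ((Finset.univ.filter fun g : Fin m → Bool => ¬ blockSat C i (j, g)).card : ℕ)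
      ≤ 2 ^ (m - ((Yv C i).erase j).card) := by
  classical
  set E := (Yv C i).erase j with hE
  set t : Fin m → Finset Bool := fun j' =>
    if j' ∈ E then (Finset.univ.filter fun v : Bool =>
        ∀ b : Bool, (IndVar.y i (j' : ℕ), b) ∈ C → v = !b) else Finset.univ with ht
  have hsub : (Finset.univ.filter fun g : Fin m → Bool => ¬ blockSat C i (j, g))
      ⊆ Fintype.piFinset t := by
    intro g hg
    rw [Finset.mem_filter] at hg
    rw [Fintype.mem_piFinset]
    intro j'
    simp only [ht]
    split
    · rename_i hj'
      rw [Finset.mem_filter]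
      refine ⟨Finset.mem_univ _, ?_⟩
      intro b hb
      have hjne : j' ≠ j := Finset.ne_of_mem_erase hj'
      have hval : val0 m j g (IndVar.y i (j' : ℕ)) = some (g j') := by
        have hne : (j' : ℕ) ≠ (j : ℕ) := fun h => hjne (Fin.val_injective h)
        simp only [val0, if_neg hne, dif_pos j'.isLt, Fin.eta]
      have : ¬ (val0 m j g (IndVar.y i (j' : ℕ)) = some b) := by
        intro hcon
        exact hg.2 ⟨(IndVar.y i (j' : ℕ), b), hb, rfl, hcon⟩
      rw [hval] at this
      have : g j' ≠ b := fun hh => this (by rw [hh])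
      revert this; cases b <;> cases g j' <;> simp
    · exact Finset.mem_univ _
  calc ((Finset.univ.filter fun g : Fin m → Bool => ¬ blockSat C i (j, g)).card : ℕ)
      ≤ (Fintype.piFinset t).card := Finset.card_le_card hsub
    _ = ∏ j', (t j').card := Fintype.card_piFinset t
    _ ≤ ∏ j' : Fin m, (if j' ∈ E then 1 else 2) := by
        apply Finset.prod_le_prod'
        intro j' _
        rw [ht]
        by_cases hj' : j' ∈ E
        · simp only [if_pos hj']
          apply Finset.card_le_one.mpr
          have hj'' : j' ∈ Yv C i := Finset.mem_of_mem_erase hj'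
          rw [Yv, Finset.mem_filter] at hj''
          obtain ⟨-, b0, hb0⟩ := hj''
          intro a ha b hb
          rw [Finset.mem_filter] at ha hb
          rw [ha.2 b0 hb0, hb.2 b0 hb0]
        · simp [if_neg hj']
    _ = 2 ^ (m - E.card) := by
        rw [Finset.prod_ite, Finset.prod_const, Finset.prod_const]
        simp only [one_pow, one_mul]
        congr 1
        simp only [Finset.filter_not, Finset.filter_mem_eq_inter, Finset.univ_inter]
        rw [Finset.card_sdiff_of_subset (Finset.subset_univ _), Finset.card_univ, Fintype.card_fin]

lemma sum_g_le (C : Finset (IndVar n × Bool)) (i : Fin n) (j : Fin m) :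
    ∑ g : Fin m → Bool, wgt C i (j, g)
      ≤ (if j ∈ Yv C i then ((m : ℝ) + 1) / 2 else 1)
          * 2 ^ (m - ((Yv C i).erase j).card) := by
  classical
  set c : ℝ := if j ∈ Yv C i then ((m : ℝ) + 1) / 2 else 1 with hc
  have hc0 : 0 ≤ c := by rw [hc]; split <;> positivity
  have : ∑ g : Fin m → Bool, wgt C i (j, g)
      = ∑ g ∈ (Finset.univ.filter fun g : Fin m → Bool => ¬ blockSat C i (j, g)), c := by
    rw [Finset.sum_filter]
    apply Finset.sum_congr rfl
    intro g _
    unfold wgt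
    by_cases h : blockSat C i (j, g) <;> simp [h, hc]
  rw [this, Finset.sum_const, nsmul_eq_mul, mul_comm]
  apply mul_le_mul_of_nonneg_left _ hc0
  calc ((Finset.univ.filter fun g : Fin m → Bool => ¬ blockSat C i (j, g)).card : ℝ)
      ≤ ((2 ^ (m - ((Yv C i).erase j).card) : ℕ) : ℝ) := by
        exact_mod_cast Nat.cast_le.mpr (count_bad C i j)
    _ = 2 ^ (m - ((Yv C i).erase j).card) := by push_cast; ring

lemma sum_wgt_le (hm : 2 ≤ m) (C : Finset (IndVar n × Bool)) (i : Fin n) :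
    ∑ p : Fin m × (Fin m → Bool), wgt C i p ≤ (m : ℝ) * 2 ^ m := by
  classical
  set k := (Yv C i).card with hk
  have hkm : k ≤ m := by
    rw [hk]
    calc (Yv C i).card ≤ (Finset.univ : Finset (Fin m)).card := Finset.card_le_card
          (Finset.subset_univ _)
      _ = m := by rw [Finset.card_univ, Fintype.card_fin]
  have step1 : ∑ p : Fin m × (Fin m → Bool), wgt C i p
      ≤ ∑ j : Fin m, (if j ∈ Yv C i then ((m : ℝ) + 1) / 2 else 1)
          * 2 ^ (m - ((Yv C i).erase j).card) := by
    rw [Fintype.sum_prod_type]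
    exact Finset.sum_le_sum fun j _ => sum_g_le C i j
  have step2 : ∑ j : Fin m, (if j ∈ Yv C i then ((m : ℝ) + 1) / 2 else 1)
          * 2 ^ (m - ((Yv C i).erase j).card)
      = (k : ℝ) * (((m : ℝ) + 1) / 2 * 2 ^ (m - (k - 1)))
        + ((m : ℝ) - k) * 2 ^ (m - k) := by
    have : ∀ j : Fin m, (if j ∈ Yv C i then ((m : ℝ) + 1) / 2 else 1)
          * 2 ^ (m - ((Yv C i).erase j).card)
        = if j ∈ Yv C i then ((m : ℝ) + 1) / 2 * 2 ^ (m - (k - 1)) else 2 ^ (m - k) := by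
      intro j
      by_cases hj : j ∈ Yv C i
      · rw [if_pos hj, if_pos hj, Finset.card_erase_of_mem hj, ← hk]
      · rw [if_neg hj, if_neg hj, Finset.erase_eq_of_notMem hj, ← hk, one_mul]
    rw [Finset.sum_congr rfl fun j _ => this j]
    rw [Finset.sum_ite, Finset.sum_const, Finset.sum_const]
    simp only [Finset.filter_mem_eq_inter, Finset.univ_inter, nsmul_eq_mul]
    have hcard : (Finset.univ.filter fun j : Fin m => j ∉ Yv C i).card = m - k := by
      simp only [Finset.filter_not, Finset.filter_mem_eq_inter, Finset.univ_inter]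
      rw [Finset.card_sdiff_of_subset (Finset.subset_univ _), Finset.card_univ, Fintype.card_fin, ← hk]
    rw [hcard]
    have hcast : ((m - k : ℕ) : ℝ) = (m : ℝ) - k := by
      rw [Nat.cast_sub hkm]
    rw [hcast]
  refine step1.trans ?_
  rw [step2]
  rcases Nat.eq_zero_or_pos k with hk0 | hk1
  · simp [hk0]
  · have h1 : m - (k - 1) = (m - k) + 1 := by omega
    have h3 : ((k : ℝ) + 1) ≤ 2 ^ k := by
      exact_mod_cast Nat.succ_le_of_lt ((Nat.lt_two_pow_self (n := k)))
    have h4 : ((2 : ℝ)) ^ (m - k) * 2 ^ k = 2 ^ m := by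
      rw [← pow_add, Nat.sub_add_cancel hkm]
    have hm0 : (0 : ℝ) ≤ m := Nat.cast_nonneg m
    rw [h1]
    calc (k : ℝ) * (((m : ℝ) + 1) / 2 * 2 ^ ((m - k) + 1)) + ((m : ℝ) - k) * 2 ^ (m - k)
        = ((m : ℝ) * ((k : ℝ) + 1)) * 2 ^ (m - k) := by rw [pow_succ]; ring
      _ ≤ ((m : ℝ) * 2 ^ k) * 2 ^ (m - k) := by
          apply mul_le_mul_of_nonneg_right _ (by positivity)
          exact mul_le_mul_of_nonneg_left h3 hm0
      _ = (m : ℝ) * 2 ^ m := by rw [mul_assoc, mul_comm ((2:ℝ)^k), h4]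


lemma global_sum (C : Finset (IndVar n × Bool)) :
    ∑ ω : (Fin n → Fin m) × (Fin n × Fin m → Bool),
        ∏ i, wgt C i (ω.1 i, fun j => ω.2 (i, j))
      = ∏ i, ∑ p : Fin m × (Fin m → Bool), wgt C i p := by
  classical
  rw [Fintype.sum_prod_type]
  have h1 : ∀ J : Fin n → Fin m,
      ∑ g : Fin n × Fin m → Bool, ∏ i, wgt C i (J i, fun j => g (i, j))
        = ∑ h : Fin n → Fin m → Bool, ∏ i, wgt C i (J i, h i) := by
    intro J
    exact Fintype.sum_bijective (fun g : Fin n × Fin m → Bool => fun i j => g (i, j))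
      (Equiv.curry (Fin n) (Fin m) Bool).bijective _ _ (fun g => rfl)
  calc ∑ J : Fin n → Fin m, ∑ g : Fin n × Fin m → Bool,
          ∏ i, wgt C i (J i, fun j => g (i, j))
      = ∑ J : Fin n → Fin m, ∑ h : Fin n → Fin m → Bool, ∏ i, wgt C i (J i, h i) := by
        exact Finset.sum_congr rfl fun J _ => h1 J
    _ = ∑ J : Fin n → Fin m, ∏ i, ∑ b : Fin m → Bool, wgt C i (J i, b) := by
        exact Finset.sum_congr rfl fun J _ =>
          (Fintype.prod_sum fun i b => wgt C i (J i, b)).symm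
    _ = ∏ i, ∑ a : Fin m, ∑ b : Fin m → Bool, wgt C i (a, b) := by
        exact (Fintype.prod_sum fun i a => ∑ b : Fin m → Bool, wgt C i (a, b)).symm
    _ = ∏ i, ∑ p : Fin m × (Fin m → Bool), wgt C i p := by
        exact Finset.prod_congr rfl fun i _ => (Fintype.sum_prod_type _).symm

end Stmt14


open Stmt14


/-- for the uniform random restriction `ρ = (J, g)` on the variables of
`IND_m(F)` and any (non-tautological) clause `C` over those variables, the probability
that `C|_ρ` has width at least `W` is at most `(2/(m+1))^W`. -/
theorem stmt_14 (n m : ℕ) (hm : 2 ≤ m)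
    (C : Finset (IndVar n × Bool))
    (hC : ∀ l ∈ C, l.1.jdx < m)
    (htaut : ∀ v : IndVar n, ¬ ((v, true) ∈ C ∧ (v, false) ∈ C))
    (W : ℕ) :
    ((Finset.univ.filter fun Jg : (Fin n → Fin m) × (Fin n × Fin m → Bool) =>
        W ≤ restrWidth n m Jg.1 Jg.2 C).card : ℝ)
        / (Fintype.card ((Fin n → Fin m) × (Fin n × Fin m → Bool)) : ℝ)
      ≤ (2 / ((m : ℝ) + 1)) ^ W := by
  have hm2 : (2 : ℝ) ≤ (m : ℝ) := by exact_mod_cast hm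
  have hNcard : (Fintype.card ((Fin n → Fin m) × (Fin n × Fin m → Bool)) : ℝ)
      = ((m : ℝ) * 2 ^ m) ^ n := by
    rw [Fintype.card_prod, Fintype.card_fun, Fintype.card_fun, Fintype.card_fin,
      Fintype.card_fin, Fintype.card_prod, Fintype.card_fin, Fintype.card_fin,
      Fintype.card_bool]
    push_cast
    rw [mul_pow, ← pow_mul, Nat.mul_comm n m]
  have hNpos : (0 : ℝ)
      < (Fintype.card ((Fin n → Fin m) × (Fin n × Fin m → Bool)) : ℝ) := by
    rw [hNcard]
    have hm0 : (0 : ℝ) < (m : ℝ) := by linarith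
    positivity
  rw [div_le_iff₀ hNpos]
  set S := (Finset.univ.filter fun Jg : (Fin n → Fin m) × (Fin n × Fin m → Bool) =>
        W ≤ restrWidth n m Jg.1 Jg.2 C) with hS
  rcases Nat.eq_zero_or_pos W with hW0 | hW1
  · subst hW0
    rw [pow_zero, one_mul]
    calc (S.card : ℝ) ≤ ((Finset.univ :
          Finset ((Fin n → Fin m) × (Fin n × Fin m → Bool))).card : ℝ) := by
          exact_mod_cast Finset.card_le_card (Finset.filter_subset _ _)
      _ = _ := by rw [Finset.card_univ]
  set μ : ℝ := 2 / ((m : ℝ) + 1) with hμ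
  have hμpos : 0 < μ := by rw [hμ]; positivity
  have hlam : (1 : ℝ) ≤ ((m : ℝ) + 1) / 2 := by linarith
  have hmul : μ * (((m : ℝ) + 1) / 2) = 1 := by
    rw [hμ]; field_simp
  -- pointwise bound on the event
  have key : ∀ ω ∈ S, (1 : ℝ)
      ≤ μ ^ W * ∏ i, wgt C i (ω.1 i, fun j => ω.2 (i, j)) := by
    intro ω hω
    rw [hS, Finset.mem_filter] at hω
    have hW := hω.2
    have hns : ¬∃ l ∈ C, restrVal n m ω.1 ω.2 l.1 = some l.2 := by
      intro h
      rw [restrWidth, if_pos h] at hW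
      omega
    have hwd : W ≤ (C.filter fun l => restrVal n m ω.1 ω.2 l.1 = none).card := by
      rw [restrWidth, if_neg hns] at hW
      exact hW
    have hbs : ∀ i, ¬ blockSat C i (ω.1 i, fun j => ω.2 (i, j)) := by
      rintro i ⟨l, hl, hidx, hval⟩
      exact hns ⟨l, hl, by rw [restrVal_eq, hidx]; exact hval⟩
    have hcardT : W ≤ (Finset.univ.filter fun i : Fin n => ω.1 i ∈ Yv C i).card := by
      refine hwd.trans (Finset.card_le_card_of_injOn (fun l => idx l.1) ?_ ?_)
      · intro l hl
        rw [Finset.mem_coe, Finset.mem_filter] at hl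
        obtain ⟨hlC, hlnone⟩ := hl
        have hly := restrVal_none hlnone
        rw [Finset.mem_coe, Finset.mem_filter]
        refine ⟨Finset.mem_univ _, ?_⟩
        rw [Yv, Finset.mem_filter]
        refine ⟨Finset.mem_univ _, l.2, ?_⟩
        rw [← hly, Prod.mk.eta]
        exact hlC
      · intro l1 h1 l2 h2 heq
        simp only at heq
        rw [Finset.mem_coe, Finset.mem_filter] at h1 h2
        have e1 := restrVal_none h1.2
        have e2 := restrVal_none h2.2
        have hv : l1.1 = l2.1 := by rw [e1, e2, heq]
        have hb : l1.2 = l2.2 := by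
          by_contra hne
          have m1 : (l1.1, l1.2) ∈ C := by rw [Prod.mk.eta]; exact h1.1
          have m2 : (l1.1, l2.2) ∈ C := by rw [hv, Prod.mk.eta]; exact h2.1
          cases hb1 : l1.2 <;> cases hb2 : l2.2 <;>
            rw [hb1] at m1 hne <;> rw [hb2] at m2 hne
          · exact hne rfl
          · exact htaut l1.1 ⟨m2, m1⟩
          · exact htaut l1.1 ⟨m1, m2⟩
          · exact hne rfl
        exact Prod.ext hv hb
    have hprod : ∏ i, wgt C i (ω.1 i, fun j => ω.2 (i, j))
        = (((m : ℝ) + 1) / 2)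
            ^ (Finset.univ.filter fun i : Fin n => ω.1 i ∈ Yv C i).card := by
      have hw : ∀ i, wgt C i (ω.1 i, fun j => ω.2 (i, j))
          = if ω.1 i ∈ Yv C i then ((m : ℝ) + 1) / 2 else 1 := by
        intro i
        unfold wgt
        rw [if_neg (hbs i)]
      rw [Finset.prod_congr rfl fun i _ => hw i, Finset.prod_ite, Finset.prod_const,
        Finset.prod_const, one_pow, mul_one]
    rw [hprod]
    have h5 : (((m : ℝ) + 1) / 2) ^ W ≤ (((m : ℝ) + 1) / 2)
        ^ (Finset.univ.filter fun i : Fin n => ω.1 i ∈ Yv C i).card :=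
      pow_le_pow_right₀ hlam hcardT
    calc (1 : ℝ) = (μ * (((m : ℝ) + 1) / 2)) ^ W := by rw [hmul, one_pow]
      _ = μ ^ W * (((m : ℝ) + 1) / 2) ^ W := by rw [mul_pow]
      _ ≤ _ := mul_le_mul_of_nonneg_left h5 (pow_nonneg hμpos.le W)
  calc (S.card : ℝ) = ∑ _ω ∈ S, (1 : ℝ) := by
        rw [Finset.sum_const, nsmul_eq_mul, mul_one]
    _ ≤ ∑ ω ∈ S, μ ^ W * ∏ i, wgt C i (ω.1 i, fun j => ω.2 (i, j)) :=
        Finset.sum_le_sum key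
    _ ≤ ∑ ω : (Fin n → Fin m) × (Fin n × Fin m → Bool),
          μ ^ W * ∏ i, wgt C i (ω.1 i, fun j => ω.2 (i, j)) := by
        apply Finset.sum_le_sum_of_subset_of_nonneg (Finset.subset_univ S)
        intro ω _ _
        exact mul_nonneg (pow_nonneg hμpos.le W)
          (Finset.prod_nonneg fun i _ => wgt_nonneg C i _)
    _ = μ ^ W * ∑ ω : (Fin n → Fin m) × (Fin n × Fin m → Bool),
          ∏ i, wgt C i (ω.1 i, fun j => ω.2 (i, j)) := by rw [Finset.mul_sum]
    _ = μ ^ W * ∏ i : Fin n, ∑ p : Fin m × (Fin m → Bool), wgt C i p := by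
        rw [global_sum]
    _ ≤ μ ^ W * ∏ _i : Fin n, ((m : ℝ) * 2 ^ m) := by
        apply mul_le_mul_of_nonneg_left _ (pow_nonneg hμpos.le W)
        exact Finset.prod_le_prod
          (fun i _ => Finset.sum_nonneg fun p _ => wgt_nonneg C i p)
          (fun i _ => sum_wgt_le hm C i)
    _ = μ ^ W * ((m : ℝ) * 2 ^ m) ^ n := by
        rw [Finset.prod_const, Finset.card_univ, Fintype.card_fin]
    _ = _ := by rw [hNcard]
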